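/- If k₀² + k₁² ≤ 1, then sup{λ₁(q) : q ∈ L¹[0,1], q ≤ 0 a.e., ∫₀¹ q dx = −1} = k₀² + k₁² − 1. -/

import Mathlib

open MeasureTheory Set Real Filter

/-- A test function on `[0,1]`: `y` is absolutely continuous on `[0,1]` with
derivative `g` belonging to `L²[0,1]`. -/
def IsTest (y g : ℝ → ℝ) : Prop :=
  (∀ x ∈ Icc (0:ℝ) 1, y x = y 0 + ∫ t in (0:ℝ)..x, g t) ∧
  IntegrableOn g (Icc (0:ℝ) 1) ∧
  IntegrableOn (fun x => (g x) ^ 2) (Icc (0:ℝ) 1)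

/-- The set of Rayleigh quotients of test functions for the Sturm–Liouville problem
`-y'' + q y = λ y`, `y'(0) - k₀² y(0) = 0`, `y'(1) + k₁² y(1) = 0`. -/
def RayleighSet (k0 k1 : ℝ) (q : ℝ → ℝ) : Set ℝ :=
  { r : ℝ | ∃ y g : ℝ → ℝ, IsTest y g ∧ (0 < ∫ x in (0:ℝ)..1, (y x) ^ 2) ∧
      r = ((∫ x in (0:ℝ)..1, ((g x) ^ 2 + q x * (y x) ^ 2))
            + k0 ^ 2 * (y 0) ^ 2 + k1 ^ 2 * (y 1) ^ 2) / (∫ x in (0:ℝ)..1, (y x) ^ 2) }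

/-- The first eigenvalue `λ₁(q)` defined as the infimum of the Rayleigh quotient. -/
noncomputable def lam1 (k0 k1 : ℝ) (q : ℝ → ℝ) : ℝ :=
  sInf (RayleighSet k0 k1 q)

namespace SLaux

lemma ii_of (f : ℝ → ℝ) (hf : IntegrableOn f (Icc (0:ℝ) 1)) {a b : ℝ}
    (ha : a ∈ Icc (0:ℝ) 1) (hb : b ∈ Icc (0:ℝ) 1) :
    IntervalIntegrable f volume a b := by
  apply MeasureTheory.IntegrableOn.intervalIntegrable
  apply hf.mono_set
  refine (uIcc_subset_uIcc (?_ : a ∈ uIcc (0:ℝ) 1) ?_).trans ?_ <;>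
    rw [uIcc_of_le zero_le_one]
  · exact ha
  · exact hb

lemma test_cont {y g : ℝ → ℝ} (h : IsTest y g) : ContinuousOn y (Icc (0:ℝ) 1) := by
  have h1 : IntegrableOn g (uIcc (0:ℝ) 1) := by rw [uIcc_of_le zero_le_one]; exact h.2.1
  have h2 : ContinuousOn (fun x => y 0 + ∫ t in (0:ℝ)..x, g t) (Icc (0:ℝ) 1) := by
    have := intervalIntegral.continuousOn_primitive_interval (a := 0) (b := 1) (μ := volume) h1
    rw [uIcc_of_le zero_le_one] at this
    exact continuousOn_const.add this
  exact h2.congr h.1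

lemma iiIcc {f : ℝ → ℝ} {a b : ℝ} (hab : a ≤ b) (hf : IntegrableOn f (Icc a b)) :
    IntervalIntegrable f volume a b := by
  rw [intervalIntegrable_iff_integrableOn_Icc_of_le hab]; exact hf

set_option maxHeartbeats 1000000 in
/-- Key Fubini identity: integral of a primitive against its integrand. -/
lemma core {g : ℝ → ℝ} {a b : ℝ} (hab : a ≤ b) (hg : IntegrableOn g (Icc a b)) :
    ∫ s in a..b, (∫ u in a..s, g u) * g s = (∫ u in a..b, g u) ^ 2 / 2 := by
  set μ := volume.restrict (Ioc a b) with hμ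
  have hgI : Integrable g μ := hg.mono_set Ioc_subset_Icc_self
  have hgiab : IntervalIntegrable g volume a b := iiIcc hab hg
  set F := fun s => ∫ u in a..s, g u with hF
  have hFc : ContinuousOn F (Icc a b) := by
    have h1 : IntegrableOn g (uIcc a b) := by rw [uIcc_of_le hab]; exact hg
    have := intervalIntegral.continuousOn_primitive_interval (a := a) (b := b)
      (μ := volume) h1
    rwa [uIcc_of_le hab] at this
  have hFcu : ContinuousOn F (uIcc a b) := by rw [uIcc_of_le hab]; exact hFc
  have hFgii : IntervalIntegrable (fun s => F s * g s) volume a b :=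
    hgiab.continuousOn_mul hFcu
  have hFgI : Integrable (fun s => F s * g s) μ := by
    rw [hμ, ← IntegrableOn]
    exact (intervalIntegrable_iff_integrableOn_Ioc_of_le hab).1 hFgii
  have hset : MeasurableSet {p : ℝ × ℝ | p.2 ≤ p.1} :=
    measurableSet_le measurable_snd measurable_fst
  have hprod : Integrable (fun p : ℝ × ℝ => if p.2 ≤ p.1 then g p.2 * g p.1 else 0)
      (μ.prod μ) := by
    have h1 : Integrable (fun p : ℝ × ℝ => g p.1 * g p.2) (μ.prod μ) := hgI.mul_prod hgI
    have h2 : Integrable (fun p : ℝ × ℝ => g p.2 * g p.1) (μ.prod μ) := by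
      simpa [mul_comm] using h1
    have h3 := h2.indicator (s := {p : ℝ × ℝ | p.2 ≤ p.1}) hset
    apply h3.congr
    filter_upwards with p
    by_cases h : p.2 ≤ p.1 <;> simp [Set.indicator_apply, Set.mem_setOf_eq, h]
  have hswap : (∫ s, (∫ u, (if u ≤ s then g u * g s else 0) ∂μ) ∂μ)
      = ∫ u, (∫ s, (if u ≤ s then g u * g s else 0) ∂μ) ∂μ :=
    MeasureTheory.integral_integral_swap
      (f := fun s u => if u ≤ s then g u * g s else 0) hprod
  have hleft : ∀ s ∈ Ioc a b, (∫ u, (if u ≤ s then g u * g s else 0) ∂μ) = F s * g s := by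
    intro s hs
    have e1 : (fun u => if u ≤ s then g u * g s else 0)
        = fun u => (if u ≤ s then g u else 0) * g s := by
      funext u; by_cases h : u ≤ s <;> simp [h]
    rw [e1, MeasureTheory.integral_mul_const]
    congr 1
    have e2 : (fun u => if u ≤ s then g u else 0) = (Iic s).indicator g := by
      funext u; simp [Set.indicator_apply]
    rw [e2, MeasureTheory.integral_indicator measurableSet_Iic, hμ,
      Measure.restrict_restrict measurableSet_Iic]
    have e3 : Iic s ∩ Ioc a b = Ioc a s := by
      ext u
      simp only [mem_inter_iff, mem_Iic, mem_Ioc]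
      exact ⟨fun h => ⟨h.2.1, h.1⟩, fun h => ⟨h.2, h.1, h.2.trans hs.2⟩⟩
    rw [e3, hF]
    exact (intervalIntegral.integral_of_le (le_of_lt hs.1)).symm
  have hright : ∀ u ∈ Ioc a b, (∫ s, (if u ≤ s then g u * g s else 0) ∂μ)
      = g u * (F b - F u) := by
    intro u hu
    have e1 : (fun s => if u ≤ s then g u * g s else 0)
        = fun s => g u * (if u ≤ s then g s else 0) := by
      funext s; by_cases h : u ≤ s <;> simp [h]
    rw [e1, MeasureTheory.integral_const_mul]
    congr 1
    have e2 : (fun s => if u ≤ s then g s else 0) = (Ici u).indicator g := by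
      funext s; simp [Set.indicator_apply]
    rw [e2, MeasureTheory.integral_indicator measurableSet_Ici, hμ,
      Measure.restrict_restrict measurableSet_Ici]
    have e3 : Ici u ∩ Ioc a b = Icc u b := by
      ext s
      simp only [mem_inter_iff, mem_Ici, mem_Ioc, mem_Icc]
      exact ⟨fun h => ⟨h.1, h.2.2⟩, fun h => ⟨h.1, hu.1.trans_le h.1, h.2⟩⟩
    have hgau : IntervalIntegrable g volume a u := hgiab.mono_set (by
      rw [uIcc_of_le (le_of_lt hu.1), uIcc_of_le hab]
      exact Icc_subset_Icc le_rfl hu.2)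
    rw [e3, MeasureTheory.integral_Icc_eq_integral_Ioc,
      ← intervalIntegral.integral_of_le hu.2, hF,
      ← intervalIntegral.integral_interval_sub_left hgiab hgau]
  have hL : (∫ s, (∫ u, (if u ≤ s then g u * g s else 0) ∂μ) ∂μ)
      = ∫ s, F s * g s ∂μ := by
    rw [hμ]
    exact MeasureTheory.setIntegral_congr_fun measurableSet_Ioc (fun s hs => hleft s hs)
  have hR : (∫ u, (∫ s, (if u ≤ s then g u * g s else 0) ∂μ) ∂μ)
      = (∫ u in a..b, g u) ^ 2 - ∫ s, F s * g s ∂μ := by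
    rw [hμ, MeasureTheory.setIntegral_congr_fun measurableSet_Ioc
      (fun u hu => hright u hu)]
    have hsplit : (fun u => g u * (F b - F u)) = fun u => g u * F b - F u * g u := by
      funext u; ring
    rw [hsplit, MeasureTheory.integral_sub ((hgI.mul_const (F b))) hFgI,
      MeasureTheory.integral_mul_const]
    have hIoc : (∫ u in Ioc a b, g u) = ∫ u in a..b, g u :=
      (intervalIntegral.integral_of_le hab).symm
    rw [← hμ, hIoc]
    have : F b = ∫ u in a..b, g u := rfl
    rw [this]
    ring
  have h2T : (2:ℝ) * ∫ s, F s * g s ∂μ = (∫ u in a..b, g u) ^ 2 := by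
    rw [hL, hR] at hswap
    linarith
  have hTT : ∫ s in a..b, F s * g s = ∫ s, F s * g s ∂μ := by
    rw [hμ, intervalIntegral.integral_of_le hab]
  rw [show (fun s => (∫ u in a..s, g u) * g s) = fun s => F s * g s from rfl] at *
  rw [hTT]
  linarith

lemma sq_eq {y g : ℝ → ℝ} (h : IsTest y g) {a b : ℝ} (ha : a ∈ Icc (0:ℝ) 1)
    (hb : b ∈ Icc (0:ℝ) 1) (hab : a ≤ b) :
    (y b) ^ 2 - (y a) ^ 2 = ∫ s in a..b, 2 * y s * g s := by
  set F := fun s => ∫ u in (0:ℝ)..s, g u with hF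
  have hsub : Icc a b ⊆ Icc (0:ℝ) 1 := Icc_subset_Icc ha.1 hb.2
  have hgab : IntegrableOn g (Icc a b) := h.2.1.mono_set hsub
  have hgi : IntervalIntegrable g volume a b := iiIcc hab hgab
  have hg0a : IntervalIntegrable g volume 0 a :=
    iiIcc ha.1 (h.2.1.mono_set (Icc_subset_Icc le_rfl ha.2))
  have hg0b : IntervalIntegrable g volume 0 b :=
    iiIcc hb.1 (h.2.1.mono_set (Icc_subset_Icc le_rfl hb.2))
  have hFc01 : ContinuousOn F (Icc (0:ℝ) 1) := by
    have h1 : IntegrableOn g (uIcc (0:ℝ) 1) := by rw [uIcc_of_le zero_le_one]; exact h.2.1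
    have := intervalIntegral.continuousOn_primitive_interval (a := 0) (b := 1)
      (μ := volume) h1
    rwa [uIcc_of_le zero_le_one] at this
  have hFcu : ContinuousOn F (uIcc a b) := by
    rw [uIcc_of_le hab]; exact hFc01.mono hsub
  have hFgi : IntervalIntegrable (fun s => F s * g s) volume a b :=
    hgi.continuousOn_mul hFcu
  have hcong : EqOn (fun s => 2 * y s * g s)
      (fun s => 2 * y 0 * g s + 2 * (F s * g s)) (uIcc a b) := by
    intro s hs
    rw [uIcc_of_le hab] at hs
    have hs1 : s ∈ Icc (0:ℝ) 1 := hsub hs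
    simp only
    rw [h.1 s hs1]
    ring
  rw [intervalIntegral.integral_congr hcong]
  have h1 : IntervalIntegrable (fun s => 2 * y 0 * g s) volume a b := hgi.const_mul _
  have h2 : IntervalIntegrable (fun s => 2 * (F s * g s)) volume a b := hFgi.const_mul _
  rw [intervalIntegral.integral_add h1 h2, intervalIntegral.integral_const_mul,
    intervalIntegral.integral_const_mul]
  have hFab : (∫ s in a..b, g s) = F b - F a := by
    rw [hF]
    exact (intervalIntegral.integral_interval_sub_left hg0b hg0a).symm
  have hFs : (∫ s in a..b, F s * g s) = F a * (F b - F a) + (F b - F a) ^ 2 / 2 := by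
    have hEq : EqOn (fun s => F s * g s)
        (fun s => F a * g s + (∫ u in a..s, g u) * g s) (uIcc a b) := by
      intro s hs
      rw [uIcc_of_le hab] at hs
      have hgas : IntervalIntegrable g volume a s :=
        iiIcc hs.1 (hgab.mono_set (Icc_subset_Icc le_rfl hs.2))
      simp only
      have : F s = F a + ∫ u in a..s, g u := by
        rw [hF]
        exact (intervalIntegral.integral_add_adjacent_intervals hg0a hgas).symm
      rw [this]; ring
    have hcore := core hab hgab
    have hii2 : IntervalIntegrable (fun s => (∫ u in a..s, g u) * g s) volume a b := by
      have hGc : ContinuousOn (fun s => ∫ u in a..s, g u) (uIcc a b) := by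
        have h1 : IntegrableOn g (uIcc a b) := by rw [uIcc_of_le hab]; exact hgab
        exact intervalIntegral.continuousOn_primitive_interval h1
      exact hgi.continuousOn_mul hGc
    rw [intervalIntegral.integral_congr hEq,
      intervalIntegral.integral_add (hgi.const_mul _) hii2,
      intervalIntegral.integral_const_mul, hcore, hFab]
  rw [hFab, hFs, h.1 a ha, h.1 b hb]
  ring

lemma ptwise {y g : ℝ → ℝ} (h : IsTest y g) {c d w : ℝ} (hc : 0 ≤ c) (hd : d ≤ 1)
    (hcd : c ≤ d) (hw : 0 < w) {p t : ℝ} (hp : p ∈ Icc c d) (ht : t ∈ Icc c d) :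
    (y p) ^ 2 ≤ (y t) ^ 2
      + (w * (∫ s in Icc c d, (y s) ^ 2) + w⁻¹ * ∫ s in Icc c d, (g s) ^ 2) := by
  have hsub : Icc c d ⊆ Icc (0:ℝ) 1 := Icc_subset_Icc hc hd
  have hyc : ContinuousOn y (Icc c d) := (test_cont h).mono hsub
  have hy2 : IntegrableOn (fun s => (y s) ^ 2) (Icc c d) :=
    (hyc.pow 2).integrableOn_Icc
  have hg2 : IntegrableOn (fun s => (g s) ^ 2) (Icc c d) := h.2.2.mono_set hsub
  have hygi : IntervalIntegrable (fun s => 2 * y s * g s) volume c d := by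
    have hgcd : IntervalIntegrable g volume c d := iiIcc hcd (h.2.1.mono_set hsub)
    have hyc2 : ContinuousOn (fun s => 2 * y s) (uIcc c d) := by
      rw [uIcc_of_le hcd]; exact continuousOn_const.mul hyc
    exact hgcd.continuousOn_mul hyc2
  have hygIcc : IntegrableOn (fun s => |2 * y s * g s|) (Icc c d) := by
    rw [← intervalIntegrable_iff_integrableOn_Icc_of_le hcd]
    exact hygi.abs
  have hwsum : IntegrableOn (fun s => w * (y s) ^ 2 + w⁻¹ * (g s) ^ 2) (Icc c d) :=
    (hy2.const_mul w).add (hg2.const_mul w⁻¹)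
  have key : |(y p) ^ 2 - (y t) ^ 2| ≤ ∫ s in Icc c d, |2 * y s * g s| := by
    have hsubI : Set.uIoc t p ⊆ Icc c d := by
      apply Set.Subset.trans Ioc_subset_Icc_self
      apply Icc_subset_Icc <;>
        simp [le_max_iff, min_le_iff, ht.1, hp.1, ht.2, hp.2, inf_le_iff, le_sup_iff]
    have habs : |∫ s in t..p, 2 * y s * g s| ≤ ∫ s in Set.uIoc t p, |2 * y s * g s| := by
      have := intervalIntegral.norm_integral_le_integral_norm_uIoc
        (f := fun s => 2 * y s * g s) (a := t) (b := p) (μ := volume)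
      simp only [Real.norm_eq_abs] at this
      exact this
    have hmono : (∫ s in Set.uIoc t p, |2 * y s * g s|) ≤ ∫ s in Icc c d, |2 * y s * g s| := by
      apply setIntegral_mono_set hygIcc
      · filter_upwards with s using abs_nonneg _
      · exact HasSubset.Subset.eventuallyLE hsubI
    rcases le_total t p with htp | htp
    · have := sq_eq h (hsub ht) (hsub hp) htp
      rw [← this] at habs
      exact le_trans habs hmono
    · have := sq_eq h (hsub hp) (hsub ht) htp
      have h2 : (∫ s in t..p, 2 * y s * g s) = -∫ s in p..t, 2 * y s * g s :=
        intervalIntegral.integral_symm _ _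
      have heq : (y p) ^ 2 - (y t) ^ 2 = ∫ s in t..p, 2 * y s * g s := by
        rw [h2, ← this]; ring
      rw [heq]
      exact le_trans habs hmono
  have hptw : (∫ s in Icc c d, |2 * y s * g s|)
      ≤ ∫ s in Icc c d, (w * (y s) ^ 2 + w⁻¹ * (g s) ^ 2) := by
    apply setIntegral_mono_on hygIcc hwsum measurableSet_Icc
    intro s _
    have h1 : |2 * y s * g s| = 2 * |y s| * |g s| := by
      rw [abs_mul, abs_mul]; simp
    rw [h1]
    have h2 : (y s) ^ 2 = |y s| ^ 2 := (sq_abs _).symm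
    have h3 : (g s) ^ 2 = |g s| ^ 2 := (sq_abs _).symm
    rw [h2, h3]
    have h4 := sq_nonneg (w * |y s| - |g s|)
    have h5 : 0 < w⁻¹ := inv_pos.2 hw
    have h6 : w * w⁻¹ = 1 := mul_inv_cancel₀ (ne_of_gt hw)
    nlinarith [abs_nonneg (y s), abs_nonneg (g s)]
  have hsplit : (∫ s in Icc c d, (w * (y s) ^ 2 + w⁻¹ * (g s) ^ 2))
      = w * (∫ s in Icc c d, (y s) ^ 2) + w⁻¹ * ∫ s in Icc c d, (g s) ^ 2 := by
    rw [MeasureTheory.integral_add (hy2.const_mul w) (hg2.const_mul w⁻¹),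
      MeasureTheory.integral_const_mul, MeasureTheory.integral_const_mul]
  have := abs_le.1 key
  linarith [this.1, this.2, hptw, hsplit.le, hsplit.ge]

lemma avg_lb {y g : ℝ → ℝ} (h : IsTest y g) {c d w : ℝ} (hc : 0 ≤ c) (hd : d ≤ 1)
    (hcd : c ≤ d) (hw : 0 < w) {p : ℝ} (hp : p ∈ Icc c d) :
    (y p) ^ 2 * (d - c) ≤ (∫ s in Icc c d, (y s) ^ 2)
      + (d - c) * (w * (∫ s in Icc c d, (y s) ^ 2) + w⁻¹ * ∫ s in Icc c d, (g s) ^ 2) := by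
  set E := w * (∫ s in Icc c d, (y s) ^ 2) + w⁻¹ * ∫ s in Icc c d, (g s) ^ 2 with hE
  have hsub : Icc c d ⊆ Icc (0:ℝ) 1 := Icc_subset_Icc hc hd
  have hy2 : IntegrableOn (fun s => (y s) ^ 2) (Icc c d) :=
    (((test_cont h).mono hsub).pow 2).integrableOn_Icc
  have hcE : IntegrableOn (fun _ : ℝ => E) (Icc c d) :=
    integrableOn_const measure_Icc_lt_top.ne
  have hconst : IntegrableOn (fun _ : ℝ => (y p) ^ 2) (Icc c d) :=
    integrableOn_const measure_Icc_lt_top.ne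
  have hvol : (volume (Icc c d)).toReal = d - c := by
    rw [Real.volume_Icc, ENNReal.toReal_ofReal (sub_nonneg.2 hcd)]
  have hmono : (y p) ^ 2 * (d - c) ≤ ∫ t in Icc c d, ((y t) ^ 2 + E) := by
    have := setIntegral_mono_on (f := fun _ : ℝ => (y p) ^ 2)
      (g := fun t => (y t) ^ 2 + E) hconst (by exact hy2.add hcE) measurableSet_Icc
      (fun t ht => ptwise h hc hd hcd hw hp ht)
    rw [setIntegral_const, measureReal_def, hvol, smul_eq_mul] at this
    simpa [mul_comm] using this
  have hsum : (∫ t in Icc c d, ((y t) ^ 2 + E))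
      = (∫ t in Icc c d, (y t) ^ 2) + (d - c) * E := by
    rw [MeasureTheory.integral_add hy2 hcE, setIntegral_const, measureReal_def, hvol, smul_eq_mul]
  linarith

lemma avg_ub {y g : ℝ → ℝ} (h : IsTest y g) {c d w : ℝ} (hc : 0 ≤ c) (hd : d ≤ 1)
    (hcd : c ≤ d) (hw : 0 < w) {p : ℝ} (hp : p ∈ Icc c d) :
    (∫ s in Icc c d, (y s) ^ 2) ≤ (d - c) * ((y p) ^ 2
      + (w * (∫ s in Icc c d, (y s) ^ 2) + w⁻¹ * ∫ s in Icc c d, (g s) ^ 2)) := by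
  set E := w * (∫ s in Icc c d, (y s) ^ 2) + w⁻¹ * ∫ s in Icc c d, (g s) ^ 2 with hE
  have hsub : Icc c d ⊆ Icc (0:ℝ) 1 := Icc_subset_Icc hc hd
  have hy2 : IntegrableOn (fun s => (y s) ^ 2) (Icc c d) :=
    (((test_cont h).mono hsub).pow 2).integrableOn_Icc
  have hconst : IntegrableOn (fun _ : ℝ => (y p) ^ 2 + E) (Icc c d) :=
    integrableOn_const measure_Icc_lt_top.ne
  have hvol : (volume (Icc c d)).toReal = d - c := by
    rw [Real.volume_Icc, ENNReal.toReal_ofReal (sub_nonneg.2 hcd)]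
  have hmono := setIntegral_mono_on hy2 hconst measurableSet_Icc
    (fun t ht => ptwise h hc hd hcd hw ht hp)
  rwa [setIntegral_const, measureReal_def, hvol, smul_eq_mul] at hmono

lemma sup_bound {y g : ℝ → ℝ} (h : IsTest y g) {x : ℝ} (hx : x ∈ Icc (0:ℝ) 1) :
    (y x) ^ 2 ≤ 2 * (∫ s in Icc (0:ℝ) 1, (y s) ^ 2) + ∫ s in Icc (0:ℝ) 1, (g s) ^ 2 := by
  have := avg_lb h (le_refl (0:ℝ)) (le_refl (1:ℝ)) zero_le_one one_pos hx
  norm_num at this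
  linarith

lemma int_sq_nonneg (f : ℝ → ℝ) (s : Set ℝ) : 0 ≤ ∫ t in s, (f t) ^ 2 :=
  MeasureTheory.integral_nonneg (fun t => sq_nonneg _)

lemma int01 (f : ℝ → ℝ) : ∫ x in (0:ℝ)..1, f x = ∫ x in Icc (0:ℝ) 1, f x := by
  rw [intervalIntegral.integral_of_le zero_le_one,
    MeasureTheory.integral_Icc_eq_integral_Ioc]

lemma local0 {y g : ℝ → ℝ} (h : IsTest y g) {m : ℝ} (hm : 2 ≤ m) :
    m ^ 2 * (∫ s in Icc (0:ℝ) ((m ^ 2)⁻¹), (y s) ^ 2)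
      ≤ (y 0) ^ 2 + (2 * (∫ s in Icc (0:ℝ) 1, (y s) ^ 2)
        + 2 * (∫ s in Icc (0:ℝ) 1, (g s) ^ 2)) * m⁻¹ := by
  have hm0 : (0:ℝ) < m := by linarith
  have hm2 : (0:ℝ) < m ^ 2 := by positivity
  have hm4 : (4:ℝ) ≤ m ^ 2 := by nlinarith
  set δ := (m ^ 2)⁻¹ with hδ
  have hδpos : 0 < δ := by positivity
  have hδm : δ * m ^ 2 = 1 := inv_mul_cancel₀ (ne_of_gt hm2)
  have hδ1 : δ ≤ 1 := by nlinarith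
  have h0mem : (0:ℝ) ∈ Icc (0:ℝ) δ := ⟨le_rfl, hδpos.le⟩
  have havg := avg_ub h le_rfl hδ1 hδpos.le hm0 h0mem
  rw [sub_zero] at havg
  set P := ∫ s in Icc (0:ℝ) δ, (y s) ^ 2 with hP
  set Q := ∫ s in Icc (0:ℝ) δ, (g s) ^ 2 with hQ
  set Y := ∫ s in Icc (0:ℝ) 1, (y s) ^ 2 with hY
  set G := ∫ s in Icc (0:ℝ) 1, (g s) ^ 2 with hG
  have hsub : Icc (0:ℝ) δ ⊆ Icc (0:ℝ) 1 := Icc_subset_Icc le_rfl hδ1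
  have hPK : P ≤ (2 * Y + G) * δ := by
    have hb : ∀ t ∈ Icc (0:ℝ) δ, (y t) ^ 2 ≤ 2 * Y + G := fun t ht => sup_bound h (hsub ht)
    have hy2' : IntegrableOn (fun s => (y s) ^ 2) (Icc (0:ℝ) δ) volume :=
      (((test_cont h).mono hsub).pow 2).integrableOn_Icc
    have h2 := setIntegral_mono_on hy2'
      (integrableOn_const measure_Icc_lt_top.ne) measurableSet_Icc hb
    rwa [setIntegral_const, measureReal_def, Real.volume_Icc, sub_zero, ENNReal.toReal_ofReal hδpos.le,
      smul_eq_mul, mul_comm] at h2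
  have hQG : Q ≤ G := by
    apply setIntegral_mono_set h.2.2
    · filter_upwards with s using sq_nonneg _
    · exact HasSubset.Subset.eventuallyLE hsub
  have h1 : m ^ 2 * P ≤ m ^ 2 * (δ * ((y 0) ^ 2 + (m * P + m⁻¹ * Q))) :=
    mul_le_mul_of_nonneg_left havg (le_of_lt hm2)
  have h2 : m ^ 2 * (δ * ((y 0) ^ 2 + (m * P + m⁻¹ * Q)))
      = (y 0) ^ 2 + (m * P + m⁻¹ * Q) := by
    rw [← mul_assoc, mul_comm (m ^ 2) δ, hδm, one_mul]
  have hmδ : m * δ = m⁻¹ := by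
    rw [hδ, pow_two, mul_inv, ← mul_assoc, mul_inv_cancel₀ (ne_of_gt hm0), one_mul]
  have h3 : m * P ≤ (2 * Y + G) * m⁻¹ := by
    calc m * P ≤ m * ((2 * Y + G) * δ) := mul_le_mul_of_nonneg_left hPK hm0.le
      _ = (2 * Y + G) * (m * δ) := by ring
      _ = (2 * Y + G) * m⁻¹ := by rw [hmδ]
  have h4 : m⁻¹ * Q ≤ m⁻¹ * G := mul_le_mul_of_nonneg_left hQG (inv_nonneg.2 hm0.le)
  have h5 : 0 < m⁻¹ := inv_pos.2 hm0
  linarith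

lemma local1 {y g : ℝ → ℝ} (h : IsTest y g) {m : ℝ} (hm : 2 ≤ m) :
    m ^ 2 * (∫ s in Icc (1 - (m ^ 2)⁻¹) 1, (y s) ^ 2)
      ≤ (y 1) ^ 2 + (2 * (∫ s in Icc (0:ℝ) 1, (y s) ^ 2)
        + 2 * (∫ s in Icc (0:ℝ) 1, (g s) ^ 2)) * m⁻¹ := by
  have hm0 : (0:ℝ) < m := by linarith
  have hm2 : (0:ℝ) < m ^ 2 := by positivity
  have hm4 : (4:ℝ) ≤ m ^ 2 := by nlinarith
  set δ := (m ^ 2)⁻¹ with hδ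
  have hδpos : 0 < δ := by positivity
  have hδm : δ * m ^ 2 = 1 := inv_mul_cancel₀ (ne_of_gt hm2)
  have hδ1 : δ ≤ 1 := by nlinarith
  have h1mem : (1:ℝ) ∈ Icc (1 - δ) 1 := ⟨by linarith, le_rfl⟩
  have havg := avg_ub h (by linarith : (0:ℝ) ≤ 1 - δ) le_rfl (by linarith) hm0 h1mem
  rw [show (1:ℝ) - (1 - δ) = δ by ring] at havg
  set P := ∫ s in Icc (1 - δ) 1, (y s) ^ 2 with hP
  set Q := ∫ s in Icc (1 - δ) 1, (g s) ^ 2 with hQ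
  set Y := ∫ s in Icc (0:ℝ) 1, (y s) ^ 2 with hY
  set G := ∫ s in Icc (0:ℝ) 1, (g s) ^ 2 with hG
  have hsub : Icc (1 - δ) 1 ⊆ Icc (0:ℝ) 1 := Icc_subset_Icc (by linarith) le_rfl
  have hPK : P ≤ (2 * Y + G) * δ := by
    have hb : ∀ t ∈ Icc (1 - δ) 1, (y t) ^ 2 ≤ 2 * Y + G := fun t ht => sup_bound h (hsub ht)
    have hy2' : IntegrableOn (fun s => (y s) ^ 2) (Icc (1 - δ) 1) volume :=
      (((test_cont h).mono hsub).pow 2).integrableOn_Icc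
    have h2 := setIntegral_mono_on hy2'
      (integrableOn_const measure_Icc_lt_top.ne) measurableSet_Icc hb
    rwa [setIntegral_const, measureReal_def, Real.volume_Icc, show (1:ℝ) - (1 - δ) = δ by ring,
      ENNReal.toReal_ofReal hδpos.le, smul_eq_mul, mul_comm] at h2
  have hQG : Q ≤ G := by
    apply setIntegral_mono_set h.2.2
    · filter_upwards with s using sq_nonneg _
    · exact HasSubset.Subset.eventuallyLE hsub
  have h1 : m ^ 2 * P ≤ m ^ 2 * (δ * ((y 1) ^ 2 + (m * P + m⁻¹ * Q))) :=
    mul_le_mul_of_nonneg_left havg (le_of_lt hm2)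
  have h2 : m ^ 2 * (δ * ((y 1) ^ 2 + (m * P + m⁻¹ * Q)))
      = (y 1) ^ 2 + (m * P + m⁻¹ * Q) := by
    rw [← mul_assoc, mul_comm (m ^ 2) δ, hδm, one_mul]
  have hmδ : m * δ = m⁻¹ := by
    rw [hδ, pow_two, mul_inv, ← mul_assoc, mul_inv_cancel₀ (ne_of_gt hm0), one_mul]
  have h3 : m * P ≤ (2 * Y + G) * m⁻¹ := by
    calc m * P ≤ m * ((2 * Y + G) * δ) := mul_le_mul_of_nonneg_left hPK hm0.le
      _ = (2 * Y + G) * (m * δ) := by ring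
      _ = (2 * Y + G) * m⁻¹ := by rw [hmδ]
  have h4 : m⁻¹ * Q ≤ m⁻¹ * G := mul_le_mul_of_nonneg_left hQG (inv_nonneg.2 hm0.le)
  have h5 : 0 < m⁻¹ := inv_pos.2 hm0
  linarith

lemma form_lb (k0 k1 : ℝ) {y g q : ℝ → ℝ} (h : IsTest y g)
    (hq : IntegrableOn q (Icc (0:ℝ) 1))
    (hq0 : ∀ᵐ x ∂(volume.restrict (Icc (0:ℝ) 1)), q x ≤ 0)
    (hqi : (∫ x in (0:ℝ)..1, q x) = -1) :
    -2 * (∫ x in (0:ℝ)..1, (y x) ^ 2)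
      ≤ (∫ x in (0:ℝ)..1, ((g x) ^ 2 + q x * (y x) ^ 2))
        + k0 ^ 2 * (y 0) ^ 2 + k1 ^ 2 * (y 1) ^ 2 := by
  set Y := ∫ s in Icc (0:ℝ) 1, (y s) ^ 2 with hYd
  set G := ∫ s in Icc (0:ℝ) 1, (g s) ^ 2 with hGd
  have hyc := test_cont h
  have hy2 : IntegrableOn (fun s => (y s) ^ 2) (Icc (0:ℝ) 1) volume :=
    (hyc.pow 2).integrableOn_Icc
  have hY0 : 0 ≤ Y := int_sq_nonneg _ _
  have hG0 : 0 ≤ G := int_sq_nonneg _ _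
  have hysup : ∀ x ∈ Icc (0:ℝ) 1, (y x) ^ 2 ≤ 2 * Y + G := fun x hx => sup_bound h hx
  have hqy2m : AEStronglyMeasurable (fun x => q x * (y x) ^ 2)
      (volume.restrict (Icc (0:ℝ) 1)) :=
    hq.aestronglyMeasurable.mul ((hyc.pow 2).aestronglyMeasurable measurableSet_Icc)
  have hqy2 : IntegrableOn (fun x => q x * (y x) ^ 2) (Icc (0:ℝ) 1) := by
    apply Integrable.mono' (hq.abs.const_mul (2 * Y + G)) hqy2m
    rw [ae_restrict_iff' measurableSet_Icc]
    filter_upwards with x hx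
    rw [Real.norm_eq_abs, abs_mul, abs_of_nonneg (sq_nonneg (y x))]
    calc |q x| * (y x) ^ 2 ≤ |q x| * (2 * Y + G) :=
          mul_le_mul_of_nonneg_left (hysup x hx) (abs_nonneg _)
      _ = (2 * Y + G) * |q x| := by ring
  have hq1 : (∫ x in Icc (0:ℝ) 1, q x) = -1 := by rw [← int01]; exact hqi
  have hKq : IntegrableOn (fun x => (2 * Y + G) * q x) (Icc (0:ℝ) 1) := hq.const_mul _
  have hmono : (∫ x in Icc (0:ℝ) 1, (2 * Y + G) * q x)
      ≤ ∫ x in Icc (0:ℝ) 1, q x * (y x) ^ 2 := by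
    apply integral_mono_ae hKq hqy2
    have hsupae : ∀ᵐ x ∂(volume.restrict (Icc (0:ℝ) 1)), (y x) ^ 2 ≤ 2 * Y + G :=
      (ae_restrict_iff' measurableSet_Icc).2 (ae_of_all _ hysup)
    filter_upwards [hq0, hsupae] with x h1 h2
    nlinarith [mul_nonneg (neg_nonneg.2 h1) (sub_nonneg.2 h2)]
  have hKqval : (∫ x in Icc (0:ℝ) 1, (2 * Y + G) * q x) = -(2 * Y + G) := by
    rw [MeasureTheory.integral_const_mul, hq1]; ring
  have hgi2 : IntervalIntegrable (fun x => (g x) ^ 2) volume 0 1 := iiIcc zero_le_one h.2.2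
  have hqy2i : IntervalIntegrable (fun x => q x * (y x) ^ 2) volume 0 1 :=
    iiIcc zero_le_one hqy2
  have hsplit : (∫ x in (0:ℝ)..1, ((g x) ^ 2 + q x * (y x) ^ 2))
      = G + ∫ x in Icc (0:ℝ) 1, q x * (y x) ^ 2 := by
    rw [intervalIntegral.integral_add hgi2 hqy2i, int01 (fun x => (g x) ^ 2),
      int01 (fun x => q x * (y x) ^ 2)]
  have hY01 : (∫ x in (0:ℝ)..1, (y x) ^ 2) = Y := int01 _
  have hb0 : 0 ≤ k0 ^ 2 * (y 0) ^ 2 := by positivity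
  have hb1 : 0 ≤ k1 ^ 2 * (y 1) ^ 2 := by positivity
  rw [hsplit, hY01]
  linarith

lemma mem_B (k0 k1 : ℝ) {q : ℝ → ℝ} (hqi : (∫ x in (0:ℝ)..1, q x) = -1) :
    k0 ^ 2 + k1 ^ 2 - 1 ∈ RayleighSet k0 k1 q := by
  refine ⟨fun _ => 1, fun _ => 0, ⟨?_, ?_, ?_⟩, ?_, ?_⟩
  · intro x _; simp
  · exact integrableOn_const measure_Icc_lt_top.ne
  · exact integrableOn_const measure_Icc_lt_top.ne
  · simp
  · simp only [one_pow, mul_one]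
    have h1 : (∫ x in (0:ℝ)..1, ((0:ℝ) ^ 2 + q x)) = -1 := by simpa using hqi
    rw [h1]
    norm_num
    ring

lemma rayleigh_lb (k0 k1 : ℝ) {q : ℝ → ℝ} (hq : IntegrableOn q (Icc (0:ℝ) 1))
    (hq0 : ∀ᵐ x ∂(volume.restrict (Icc (0:ℝ) 1)), q x ≤ 0)
    (hqi : (∫ x in (0:ℝ)..1, q x) = -1) :
    ∀ r ∈ RayleighSet k0 k1 q, -2 ≤ r := by
  rintro r ⟨y, g, hT, hpos, rfl⟩
  rw [le_div_iff₀ hpos]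
  have := form_lb k0 k1 hT hq hq0 hqi
  linarith

lemma lam1_le_B (k0 k1 : ℝ) {q : ℝ → ℝ} (hq : IntegrableOn q (Icc (0:ℝ) 1))
    (hq0 : ∀ᵐ x ∂(volume.restrict (Icc (0:ℝ) 1)), q x ≤ 0)
    (hqi : (∫ x in (0:ℝ)..1, q x) = -1) :
    lam1 k0 k1 q ≤ k0 ^ 2 + k1 ^ 2 - 1 :=
  csInf_le ⟨-2, fun _ hr => rayleigh_lb k0 k1 hq hq0 hqi _ hr⟩ (mem_B k0 k1 hqi)

noncomputable def qm (k0 k1 m : ℝ) : ℝ → ℝ := fun x =>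
  -(1 - k0 ^ 2 - k1 ^ 2) - (if x ≤ (m ^ 2)⁻¹ then m ^ 2 * k0 ^ 2 else 0)
    - (if 1 - (m ^ 2)⁻¹ ≤ x then m ^ 2 * k1 ^ 2 else 0)

lemma int_cut_left {δ : ℝ} (c : ℝ) (hδ0 : 0 < δ) (hδ1 : δ ≤ 1) (f : ℝ → ℝ)
    (hf : IntegrableOn f (Icc (0:ℝ) 1)) :
    (∫ x in (0:ℝ)..1, (if x ≤ δ then c else 0) * f x)
      = c * ∫ x in Icc (0:ℝ) δ, f x := by
  rw [int01]
  have e1 : (fun x => (if x ≤ δ then c else 0) * f x)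
      = (Iic δ).indicator (fun x => c * f x) := by
    funext x; by_cases h : x ≤ δ <;> simp [Set.indicator_apply, mem_Iic, h]
  rw [e1, MeasureTheory.integral_indicator measurableSet_Iic,
    Measure.restrict_restrict measurableSet_Iic]
  have e2 : Iic δ ∩ Icc (0:ℝ) 1 = Icc 0 δ := by
    ext x
    simp only [mem_inter_iff, mem_Iic, mem_Icc]
    exact ⟨fun h => ⟨h.2.1, h.1⟩, fun h => ⟨h.2, h.1, h.2.trans hδ1⟩⟩
  rw [e2, MeasureTheory.integral_const_mul]

lemma int_cut_right {δ : ℝ} (c : ℝ) (hδ0 : 0 < δ) (hδ1 : δ ≤ 1) (f : ℝ → ℝ)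
    (hf : IntegrableOn f (Icc (0:ℝ) 1)) :
    (∫ x in (0:ℝ)..1, (if 1 - δ ≤ x then c else 0) * f x)
      = c * ∫ x in Icc (1 - δ) 1, f x := by
  rw [int01]
  have e1 : (fun x => (if 1 - δ ≤ x then c else 0) * f x)
      = (Ici (1 - δ)).indicator (fun x => c * f x) := by
    funext x; by_cases h : 1 - δ ≤ x <;> simp [Set.indicator_apply, mem_Ici, h]
  rw [e1, MeasureTheory.integral_indicator measurableSet_Ici,
    Measure.restrict_restrict measurableSet_Ici]
  have e2 : Ici (1 - δ) ∩ Icc (0:ℝ) 1 = Icc (1 - δ) 1 := by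
    ext x
    simp only [mem_inter_iff, mem_Ici, mem_Icc]
    constructor
    · exact fun h => ⟨h.1, h.2.2⟩
    · intro h
      exact ⟨h.1, le_trans (by linarith) h.1, h.2⟩
  rw [e2, MeasureTheory.integral_const_mul]

lemma qm_decomp (k0 k1 m : ℝ) (f : ℝ → ℝ) :
    (fun x => qm k0 k1 m x * f x)
      = fun x => (-(1 - k0 ^ 2 - k1 ^ 2)) * f x
          - (if x ≤ (m ^ 2)⁻¹ then m ^ 2 * k0 ^ 2 else 0) * f x
          - (if 1 - (m ^ 2)⁻¹ ≤ x then m ^ 2 * k1 ^ 2 else 0) * f x := by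
  funext x
  simp only [qm]
  ring

lemma cut_intOn {δ c : ℝ} (f : ℝ → ℝ) (hf : IntegrableOn f (Icc (0:ℝ) 1)) :
    IntegrableOn (fun x => (if x ≤ δ then c else 0) * f x) (Icc (0:ℝ) 1) := by
  have e1 : (fun x => (if x ≤ δ then c else 0) * f x)
      = (Iic δ).indicator (fun x => c * f x) := by
    funext x; by_cases h : x ≤ δ <;> simp [Set.indicator_apply, mem_Iic, h]
  rw [e1]
  exact (hf.const_mul c).indicator measurableSet_Iic

lemma cut_intOn' {δ c : ℝ} (f : ℝ → ℝ) (hf : IntegrableOn f (Icc (0:ℝ) 1)) :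
    IntegrableOn (fun x => (if δ ≤ x then c else 0) * f x) (Icc (0:ℝ) 1) := by
  have e1 : (fun x => (if δ ≤ x then c else 0) * f x)
      = (Ici δ).indicator (fun x => c * f x) := by
    funext x; by_cases h : δ ≤ x <;> simp [Set.indicator_apply, mem_Ici, h]
  rw [e1]
  exact (hf.const_mul c).indicator measurableSet_Ici

lemma qm_intOn (k0 k1 m : ℝ) (f : ℝ → ℝ) (hf : IntegrableOn f (Icc (0:ℝ) 1)) :
    IntegrableOn (fun x => qm k0 k1 m x * f x) (Icc (0:ℝ) 1) := by
  rw [qm_decomp]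
  exact ((hf.const_mul _).sub (cut_intOn f hf)).sub (cut_intOn' f hf)

lemma qm_int_mul (k0 k1 : ℝ) {m : ℝ} (hm : 2 ≤ m) (f : ℝ → ℝ)
    (hf : IntegrableOn f (Icc (0:ℝ) 1)) :
    (∫ x in (0:ℝ)..1, qm k0 k1 m x * f x)
      = (-(1 - k0 ^ 2 - k1 ^ 2)) * (∫ x in Icc (0:ℝ) 1, f x)
        - m ^ 2 * k0 ^ 2 * (∫ x in Icc (0:ℝ) ((m ^ 2)⁻¹), f x)
        - m ^ 2 * k1 ^ 2 * (∫ x in Icc (1 - (m ^ 2)⁻¹) 1, f x) := by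
  have hm0 : (0:ℝ) < m := by linarith
  have hδ0 : 0 < (m ^ 2)⁻¹ := by positivity
  have hδ1 : (m ^ 2)⁻¹ ≤ 1 := by
    rw [inv_le_one₀ (by positivity)]
    nlinarith
  have i1 : IntervalIntegrable (fun x => (-(1 - k0 ^ 2 - k1 ^ 2)) * f x) volume 0 1 :=
    iiIcc zero_le_one (hf.const_mul _)
  have i2 : IntervalIntegrable
      (fun x => (if x ≤ (m ^ 2)⁻¹ then m ^ 2 * k0 ^ 2 else 0) * f x) volume 0 1 :=
    iiIcc zero_le_one (cut_intOn f hf)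
  have i3 : IntervalIntegrable
      (fun x => (if 1 - (m ^ 2)⁻¹ ≤ x then m ^ 2 * k1 ^ 2 else 0) * f x) volume 0 1 :=
    iiIcc zero_le_one (cut_intOn' f hf)
  rw [intervalIntegral.integral_congr (g := fun x => (-(1 - k0 ^ 2 - k1 ^ 2)) * f x
      - (if x ≤ (m ^ 2)⁻¹ then m ^ 2 * k0 ^ 2 else 0) * f x
      - (if 1 - (m ^ 2)⁻¹ ≤ x then m ^ 2 * k1 ^ 2 else 0) * f x)
    (fun x _ => by simp only [qm]; ring)]
  rw [intervalIntegral.integral_sub (i1.sub i2) i3, intervalIntegral.integral_sub i1 i2,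
    intervalIntegral.integral_const_mul, int01 f,
    int_cut_left (m ^ 2 * k0 ^ 2) hδ0 hδ1 f hf, int_cut_right (m ^ 2 * k1 ^ 2) hδ0 hδ1 f hf]

lemma qm_nonpos (k0 k1 : ℝ) (hk : k0 ^ 2 + k1 ^ 2 ≤ 1) (m : ℝ) (x : ℝ) :
    qm k0 k1 m x ≤ 0 := by
  have h1 : (0:ℝ) ≤ (if x ≤ (m ^ 2)⁻¹ then m ^ 2 * k0 ^ 2 else 0) := by
    split <;> positivity
  have h2 : (0:ℝ) ≤ (if 1 - (m ^ 2)⁻¹ ≤ x then m ^ 2 * k1 ^ 2 else 0) := by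
    split <;> positivity
  simp only [qm]
  linarith

lemma qm_integrableOn (k0 k1 m : ℝ) : IntegrableOn (qm k0 k1 m) (Icc (0:ℝ) 1) := by
  have h1 : IntegrableOn (fun _ : ℝ => (1:ℝ)) (Icc (0:ℝ) 1) :=
    integrableOn_const measure_Icc_lt_top.ne
  have := qm_intOn k0 k1 m (fun _ => 1) h1
  simpa using this

lemma qm_int (k0 k1 : ℝ) {m : ℝ} (hm : 2 ≤ m) :
    (∫ x in (0:ℝ)..1, qm k0 k1 m x) = -1 := by
  have hm0 : (0:ℝ) < m := by linarith
  have hm2 : (0:ℝ) < m ^ 2 := by positivity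
  have h1 : IntegrableOn (fun _ : ℝ => (1:ℝ)) (Icc (0:ℝ) 1) :=
    integrableOn_const measure_Icc_lt_top.ne
  have hδ0 : 0 < (m ^ 2)⁻¹ := by positivity
  have key := qm_int_mul k0 k1 hm (fun _ => 1) h1
  have hv1 : (∫ x in Icc (0:ℝ) 1, (1:ℝ)) = 1 := by
    rw [setIntegral_const, measureReal_def, Real.volume_Icc, smul_eq_mul]
    norm_num
  have hv2 : (∫ x in Icc (0:ℝ) ((m ^ 2)⁻¹), (1:ℝ)) = (m ^ 2)⁻¹ := by
    rw [setIntegral_const, measureReal_def, Real.volume_Icc, sub_zero, ENNReal.toReal_ofReal hδ0.le,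
      smul_eq_mul, mul_one]
  have hv3 : (∫ x in Icc (1 - (m ^ 2)⁻¹) 1, (1:ℝ)) = (m ^ 2)⁻¹ := by
    rw [setIntegral_const, measureReal_def, Real.volume_Icc, show (1:ℝ) - (1 - (m ^ 2)⁻¹) = (m ^ 2)⁻¹ by ring,
      ENNReal.toReal_ofReal hδ0.le, smul_eq_mul, mul_one]
  have hsimp : (∫ x in (0:ℝ)..1, qm k0 k1 m x)
      = ∫ x in (0:ℝ)..1, qm k0 k1 m x * (fun _ : ℝ => (1:ℝ)) x := by
    congr 1
    funext x
    simp
  rw [hsimp, key, hv1, hv2, hv3]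
  have : m ^ 2 * (m ^ 2)⁻¹ = 1 := mul_inv_cancel₀ (ne_of_gt hm2)
  nlinarith [this]

set_option maxHeartbeats 1000000 in
lemma form_qm (k0 k1 : ℝ) (hk : k0 ^ 2 + k1 ^ 2 ≤ 1) (hk0 : 0 ≤ k0) (hk01 : k0 ≤ k1)
    {m : ℝ} (hm : 2 ≤ m) {y g : ℝ → ℝ} (h : IsTest y g) :
    (k0 ^ 2 + k1 ^ 2 - 1 - 4 * m⁻¹) * (∫ x in (0:ℝ)..1, (y x) ^ 2)
      ≤ (∫ x in (0:ℝ)..1, ((g x) ^ 2 + qm k0 k1 m x * (y x) ^ 2))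
        + k0 ^ 2 * (y 0) ^ 2 + k1 ^ 2 * (y 1) ^ 2 := by
  have hm0 : (0:ℝ) < m := by linarith
  set Y := ∫ s in Icc (0:ℝ) 1, (y s) ^ 2 with hYd
  set G := ∫ s in Icc (0:ℝ) 1, (g s) ^ 2 with hGd
  set P0 := ∫ s in Icc (0:ℝ) ((m ^ 2)⁻¹), (y s) ^ 2 with hP0d
  set P1 := ∫ s in Icc (1 - (m ^ 2)⁻¹) 1, (y s) ^ 2 with hP1d
  have hy2 : IntegrableOn (fun s => (y s) ^ 2) (Icc (0:ℝ) 1) volume :=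
    ((test_cont h).pow 2).integrableOn_Icc
  have hval := qm_int_mul k0 k1 hm (fun x => (y x) ^ 2) hy2
  have hsplit : (∫ x in (0:ℝ)..1, ((g x) ^ 2 + qm k0 k1 m x * (y x) ^ 2))
      = G + (-(1 - k0 ^ 2 - k1 ^ 2) * Y - m ^ 2 * k0 ^ 2 * P0 - m ^ 2 * k1 ^ 2 * P1) := by
    rw [intervalIntegral.integral_add (iiIcc zero_le_one h.2.2)
      (iiIcc zero_le_one (qm_intOn k0 k1 m _ hy2)), int01 (fun x => (g x) ^ 2), hval]
  have hY01 : (∫ x in (0:ℝ)..1, (y x) ^ 2) = Y := int01 _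
  have hl0 := local0 h hm
  have hl1 := local1 h hm
  have hY0 : 0 ≤ Y := int_sq_nonneg _ _
  have hG0 : 0 ≤ G := int_sq_nonneg _ _
  have he0 : 0 ≤ (2 * Y + 2 * G) * m⁻¹ := by positivity
  have hk02 : k0 ^ 2 ≤ 1 := by nlinarith
  have hk12 : k1 ^ 2 ≤ 1 := by nlinarith
  have hA : m ^ 2 * k0 ^ 2 * P0 ≤ k0 ^ 2 * (y 0) ^ 2
      + k0 ^ 2 * ((2 * Y + 2 * G) * m⁻¹) := by
    linarith [mul_le_mul_of_nonneg_left hl0 (sq_nonneg k0)]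
  have hB : m ^ 2 * k1 ^ 2 * P1 ≤ k1 ^ 2 * (y 1) ^ 2
      + k1 ^ 2 * ((2 * Y + 2 * G) * m⁻¹) := by
    linarith [mul_le_mul_of_nonneg_left hl1 (sq_nonneg k1)]
  have h2m : 2 * m⁻¹ ≤ 1 := by
    rw [show (1:ℝ) = m * m⁻¹ from (mul_inv_cancel₀ (ne_of_gt hm0)).symm]
    exact mul_le_mul_of_nonneg_right hm (inv_nonneg.2 hm0.le)
  have hkE : k0 ^ 2 * ((2 * Y + 2 * G) * m⁻¹) + k1 ^ 2 * ((2 * Y + 2 * G) * m⁻¹)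
      ≤ (2 * Y + 2 * G) * m⁻¹ := by
    linarith [mul_nonneg (by linarith : (0:ℝ) ≤ 1 - k0 ^ 2 - k1 ^ 2) he0]
  have hkey : (2 * Y + 2 * G) * m⁻¹ ≤ G + 4 * m⁻¹ * Y := by
    have h1 : 0 ≤ G * (1 - 2 * m⁻¹) := mul_nonneg hG0 (by linarith)
    have h2 : 0 ≤ m⁻¹ * Y := mul_nonneg (inv_nonneg.2 hm0.le) hY0
    linarith [h1, h2]
  rw [hsplit, hY01]
  linarith [hA, hB, hkE, hkey]

lemma lam1_qm_ge (k0 k1 : ℝ) (hk : k0 ^ 2 + k1 ^ 2 ≤ 1) (hk0 : 0 ≤ k0) (hk01 : k0 ≤ k1)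
    {m : ℝ} (hm : 2 ≤ m) :
    k0 ^ 2 + k1 ^ 2 - 1 - 4 * m⁻¹ ≤ lam1 k0 k1 (qm k0 k1 m) := by
  apply le_csInf ⟨_, mem_B k0 k1 (qm_int k0 k1 hm)⟩
  rintro r ⟨y, g, hT, hpos, rfl⟩
  rw [le_div_iff₀ hpos]
  have := form_qm k0 k1 hk hk0 hk01 hm hT
  linarith

end SLaux

theorem stmt2' (k0 k1 : ℝ) (hk0 : 0 ≤ k0) (hk01 : k0 ≤ k1)
    (hk : k0 ^ 2 + k1 ^ 2 ≤ 1) :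
    sSup { r : ℝ | ∃ q : ℝ → ℝ, IntegrableOn q (Icc (0:ℝ) 1) ∧
        (∀ᵐ x ∂(volume.restrict (Icc (0:ℝ) 1)), q x ≤ 0) ∧
        (∫ x in (0:ℝ)..1, q x) = -1 ∧ r = lam1 k0 k1 q }
      = k0 ^ 2 + k1 ^ 2 - 1 := by
  have hub : ∀ r ∈ { r : ℝ | ∃ q : ℝ → ℝ, IntegrableOn q (Icc (0:ℝ) 1) ∧
      (∀ᵐ x ∂(volume.restrict (Icc (0:ℝ) 1)), q x ≤ 0) ∧
      (∫ x in (0:ℝ)..1, q x) = -1 ∧ r = lam1 k0 k1 q }, r ≤ k0 ^ 2 + k1 ^ 2 - 1 := by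
    rintro r ⟨q, hq1, hq2, hq3, rfl⟩
    exact SLaux.lam1_le_B k0 k1 hq1 hq2 hq3
  have hne : { r : ℝ | ∃ q : ℝ → ℝ, IntegrableOn q (Icc (0:ℝ) 1) ∧
      (∀ᵐ x ∂(volume.restrict (Icc (0:ℝ) 1)), q x ≤ 0) ∧
      (∫ x in (0:ℝ)..1, q x) = -1 ∧ r = lam1 k0 k1 q }.Nonempty := by
    refine ⟨lam1 k0 k1 (fun _ => -1), ⟨fun _ => -1, ?_, ?_, ?_, rfl⟩⟩
    · exact integrableOn_const measure_Icc_lt_top.ne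
    · exact ae_of_all _ (fun _ => by norm_num)
    · simp
  have hbdd : BddAbove { r : ℝ | ∃ q : ℝ → ℝ, IntegrableOn q (Icc (0:ℝ) 1) ∧
      (∀ᵐ x ∂(volume.restrict (Icc (0:ℝ) 1)), q x ≤ 0) ∧
      (∫ x in (0:ℝ)..1, q x) = -1 ∧ r = lam1 k0 k1 q } := ⟨k0 ^ 2 + k1 ^ 2 - 1, hub⟩
  apply le_antisymm (csSup_le hne hub)
  apply le_of_forall_pos_le_add
  intro ε hε
  set m := max 2 (4 / ε) with hmdef
  have hm2 : (2:ℝ) ≤ m := le_max_left _ _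
  have hm0 : (0:ℝ) < m := lt_of_lt_of_le two_pos hm2
  have h4m : 4 * m⁻¹ ≤ ε := by
    have h1 : 4 / ε ≤ m := le_max_right _ _
    have h2 : ε * (4 / ε) ≤ ε * m := mul_le_mul_of_nonneg_left h1 hε.le
    have h3 : ε * (4 / ε) = 4 := by field_simp
    calc 4 * m⁻¹ = 4 / m := by ring
      _ ≤ ε := by rw [div_le_iff₀ hm0]; nlinarith
  have hmem : lam1 k0 k1 (SLaux.qm k0 k1 m) ∈ { r : ℝ | ∃ q : ℝ → ℝ,
      IntegrableOn q (Icc (0:ℝ) 1) ∧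
      (∀ᵐ x ∂(volume.restrict (Icc (0:ℝ) 1)), q x ≤ 0) ∧
      (∫ x in (0:ℝ)..1, q x) = -1 ∧ r = lam1 k0 k1 q } :=
    ⟨SLaux.qm k0 k1 m, SLaux.qm_integrableOn k0 k1 m,
      ae_of_all _ (SLaux.qm_nonpos k0 k1 hk m), SLaux.qm_int k0 k1 hm2, rfl⟩
  have hge := SLaux.lam1_qm_ge k0 k1 hk hk0 hk01 hm2
  have hle := le_csSup hbdd hmem
  linarith


theorem stmt2 (k0 k1 : ℝ) (hk0 : 0 ≤ k0) (hk01 : k0 ≤ k1)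
    (hk : k0 ^ 2 + k1 ^ 2 ≤ 1) :
    sSup { r : ℝ | ∃ q : ℝ → ℝ, IntegrableOn q (Icc (0:ℝ) 1) ∧
        (∀ᵐ x ∂(volume.restrict (Icc (0:ℝ) 1)), q x ≤ 0) ∧
        (∫ x in (0:ℝ)..1, q x) = -1 ∧ r = lam1 k0 k1 q }
      = k0 ^ 2 + k1 ^ 2 - 1 := stmt2' k0 k1 hk0 hk01 hk
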